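/- Let j_{ν,n} denote the n-th positive zero of the Bessel function J_ν. If |ν| ≥ 1/2, then for all n ≥ 1, j_{ν,n+1} - j_{ν,n} ≥ π and the gap sequence is nonincreasing: j_{ν,n+1} - j_{ν,n} ≥ j_{ν,n+2} - j_{ν,n+1}. If |ν| < 1/2, both inequalities are reversed. -/

import Mathlib

set_option maxHeartbeats 1000000

open Set intervalIntegral MeasureTheory

/-- The Bessel function of the first kind of order `ν`, defined by its power
series `J_ν(x) = ∑ (-1)^m / (m! Γ(ν+m+1)) (x/2)^(2m+ν)` (for `x > 0`). -/
noncomputable def besselJ (ν x : ℝ) : ℝ :=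
  ∑' m : ℕ, ((-1) ^ m / ((Nat.factorial m : ℝ) * Real.Gamma (ν + m + 1)))
    * (x / 2) ^ (2 * (m : ℝ) + ν)

/-- `j : ℕ → ℝ` (indexed from `1`) enumerates the positive zeros of `J_ν` in
increasing order: `j n` is the `n`-th positive zero. -/
def IsBesselZeroSeq (ν : ℝ) (j : ℕ → ℝ) : Prop :=
  (∀ n, 1 ≤ n → 0 < j n) ∧
  (∀ m n, 1 ≤ m → m < n → j m < j n) ∧
  (∀ n, 1 ≤ n → besselJ ν (j n) = 0) ∧
  (∀ x, 0 < x → besselJ ν x = 0 → ∃ n, 1 ≤ n ∧ j n = x)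

noncomputable def besselC (ν : ℝ) (m : ℕ) : ℝ :=
  (-1) ^ m / ((Nat.factorial m : ℝ) * Real.Gamma (ν + m + 1))

lemma gamma_ratio (t : ℝ) : t / Real.Gamma (t + 1) = 1 / Real.Gamma t := by
  rcases eq_or_ne t 0 with rfl | ht
  · simp [Real.Gamma_zero, Real.Gamma_one]
  · rw [Real.Gamma_add_one ht]
    rcases eq_or_ne (Real.Gamma t) 0 with h | h
    · simp [h]
    · field_simp

lemma besselC_rec (ν : ℝ) (m : ℕ) :
    ((m : ℝ) + 1) * (ν + m + 1) * besselC ν (m + 1) = - besselC ν m := by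
  have key := gamma_ratio (ν + m + 1)
  unfold besselC
  have hfac : (Nat.factorial (m + 1) : ℝ) = ((m : ℝ) + 1) * Nat.factorial m := by
    push_cast [Nat.factorial_succ]; ring
  have h1 : (ν + ((m : ℕ) + 1 : ℕ) + 1 : ℝ) = (ν + m + 1) + 1 := by push_cast; ring
  rw [h1, hfac]
  set t := ν + (m : ℝ) + 1 with ht
  set G1 := Real.Gamma t with hG1
  set G2 := Real.Gamma (t + 1) with hG2
  have hm : (Nat.factorial m : ℝ) ≠ 0 := Nat.cast_ne_zero.2 (Nat.factorial_ne_zero m)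
  have hm1 : ((m : ℝ) + 1) ≠ 0 := by positivity
  rcases eq_or_ne G1 0 with h1' | h1'
  · rw [h1'] at key
    simp only [div_zero] at key
    rw [div_eq_zero_iff] at key
    rw [h1', mul_zero, div_zero, neg_zero]
    rcases key with k | k
    · rw [k]; ring
    · rw [k, mul_zero, div_zero]; ring
  · have h2' : G2 ≠ 0 := by
      intro h0
      rw [h0, div_zero, eq_comm, div_eq_zero_iff] at key
      rcases key with k | k
      · exact one_ne_zero k
      · exact h1' k
    have ht0 : t ≠ 0 := by
      intro h0
      rw [h0, zero_div, eq_comm, div_eq_zero_iff] at key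
      rcases key with k | k
      · exact one_ne_zero k
      · exact h1' k
    have key' : t * G1 = G2 := by
      field_simp at key
      linarith [key]
    field_simp
    linear_combination (-(-1 : ℝ) ^ m) * key'

lemma nat_aux1 (k : ℕ) : 2 * k + 3 ≤ 3 * 2 ^ k := by
  induction k with
  | zero => norm_num
  | succ n ih =>
    have h1 : (1 : ℕ) ≤ 2 ^ n := Nat.one_le_two_pow
    calc 2 * (n + 1) + 3 = (2 * n + 3) + 2 := by ring
    _ ≤ 3 * 2 ^ n + 3 * 2 ^ n := by omega
    _ = 3 * 2 ^ (n + 1) := by ring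

lemma nat_aux2 (k : ℕ) : (k + 1) ^ 2 ≤ 3 * 2 ^ k := by
  induction k with
  | zero => norm_num
  | succ n ih =>
    calc (n + 2) ^ 2 = (n + 1) ^ 2 + (2 * n + 3) := by ring
    _ ≤ 3 * 2 ^ n + 3 * 2 ^ n := Nat.add_le_add ih (nat_aux1 n)
    _ = 3 * 2 ^ (n + 1) := by ring

lemma sq_le_real (k : ℕ) : ((k : ℝ) + 1) ^ 2 ≤ 3 * 2 ^ k := by
  have := nat_aux2 k
  have : ((k + 1) ^ 2 : ℝ) ≤ ((3 * 2 ^ k : ℕ) : ℝ) := by exact_mod_cast Nat.cast_le.2 this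
  push_cast at this
  convert this using 2 <;> push_cast <;> ring

lemma besselC_abs_rec (ν : ℝ) (m : ℕ) (h : 1 ≤ ν + m + 1) :
    ((m : ℝ) + 1) * (ν + m + 1) * |besselC ν (m + 1)| = |besselC ν m| := by
  have := besselC_rec ν m
  have h1 : (0 : ℝ) < ((m : ℝ) + 1) * (ν + m + 1) := by positivity
  calc ((m : ℝ) + 1) * (ν + m + 1) * |besselC ν (m + 1)|
      = |((m : ℝ) + 1) * (ν + m + 1) * besselC ν (m + 1)| := by
        rw [abs_mul, abs_of_pos h1]
    _ = |besselC ν m| := by rw [this, abs_neg]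

lemma besselC_decay (ν : ℝ) (M : ℕ) (hM : |ν| ≤ M) (k : ℕ) :
    |besselC ν (M + k)| ≤ |besselC ν M| / Nat.factorial k := by
  induction k with
  | zero => simp
  | succ n ih =>
    have hν : -(M : ℝ) ≤ ν := neg_le_of_abs_le hM
    have h1 : (1 : ℝ) ≤ ν + (M + n : ℕ) + 1 := by push_cast; linarith
    have key := besselC_abs_rec ν (M + n) h1
    have h2 : ((n : ℝ) + 1) ≤ (((M + n : ℕ) : ℝ) + 1) * (ν + (M + n : ℕ) + 1) := by
      push_cast
      nlinarith [Nat.cast_nonneg (α := ℝ) M, Nat.cast_nonneg (α := ℝ) n]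
    have h3 : (0 : ℝ) < (((M + n : ℕ) : ℝ) + 1) * (ν + (M + n : ℕ) + 1) := by
      push_cast; nlinarith [Nat.cast_nonneg (α := ℝ) M, Nat.cast_nonneg (α := ℝ) n]
    have habs : |besselC ν (M + (n + 1))| =
        |besselC ν (M + n)| / ((((M + n : ℕ) : ℝ) + 1) * (ν + (M + n : ℕ) + 1)) := by
      rw [show M + (n + 1) = M + n + 1 from rfl, eq_div_iff h3.ne', ← key]
      ring
    rw [habs]
    calc |besselC ν (M + n)| / ((((M + n : ℕ) : ℝ) + 1) * (ν + (M + n : ℕ) + 1))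
        ≤ |besselC ν (M + n)| / ((n : ℝ) + 1) :=
          div_le_div_of_nonneg_left (abs_nonneg _) (by positivity) h2
      _ ≤ (|besselC ν M| / Nat.factorial n) / ((n : ℝ) + 1) := by
          apply div_le_div_of_nonneg_right ih (by positivity)
      _ = |besselC ν M| / Nat.factorial (n + 1) := by
          rw [div_div]
          congr 1
          push_cast [Nat.factorial_succ]
          ring

lemma besselC_master (ν R : ℝ) (hR : 0 ≤ R) :
    Summable fun m : ℕ => ((m : ℝ) + 1) ^ 2 * |besselC ν m| * R ^ m := by
  obtain ⟨M, hM⟩ := exists_nat_ge |ν|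
  rw [← summable_nat_add_iff M]
  have hsum : Summable fun k => ((M : ℝ) + 1) ^ 2 * R ^ M * |besselC ν M| * 3 * (2 * R) ^ k / Nat.factorial k := by
    have := (Real.summable_pow_div_factorial (2 * R)).mul_left (((M : ℝ) + 1) ^ 2 * R ^ M * |besselC ν M| * 3)
    exact this.congr (fun k => by ring)
  apply hsum.of_nonneg_of_le (fun k => by positivity)
  intro k
  have h1 : (((k + M : ℕ) : ℝ) + 1) ^ 2 ≤ ((M : ℝ) + 1) ^ 2 * ((k : ℝ) + 1) ^ 2 := by
    rw [← mul_pow]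
    apply pow_le_pow_left₀ (by positivity)
    push_cast
    nlinarith [Nat.cast_nonneg (α := ℝ) M, Nat.cast_nonneg (α := ℝ) k]
  have h2 : |besselC ν (k + M)| ≤ |besselC ν M| / Nat.factorial k := by
    rw [Nat.add_comm k M]; exact besselC_decay ν M hM k
  have h3 : ((k : ℝ) + 1) ^ 2 ≤ 3 * 2 ^ k := sq_le_real k
  calc (((k + M : ℕ) : ℝ) + 1) ^ 2 * |besselC ν (k + M)| * R ^ (k + M)
      ≤ (((M : ℝ) + 1) ^ 2 * ((k : ℝ) + 1) ^ 2) * (|besselC ν M| / Nat.factorial k) * R ^ (k + M) := by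
        apply mul_le_mul_of_nonneg_right _ (by positivity)
        exact mul_le_mul h1 h2 (abs_nonneg _) (by positivity)
    _ ≤ (((M : ℝ) + 1) ^ 2 * (3 * 2 ^ k)) * (|besselC ν M| / Nat.factorial k) * R ^ (k + M) := by
        apply mul_le_mul_of_nonneg_right _ (by positivity)
        apply mul_le_mul_of_nonneg_right _ (by positivity)
        exact mul_le_mul_of_nonneg_left h3 (by positivity)
    _ = ((M : ℝ) + 1) ^ 2 * R ^ M * |besselC ν M| * 3 * (2 * R) ^ k / Nat.factorial k := by
        rw [pow_add, mul_pow]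
        field_simp

lemma besselC_dom (ν R C : ℝ) (hR : 1 ≤ R) (l : ℕ) (f : ℕ → ℝ)
    (hf : ∀ m, |f m| ≤ C * (((m : ℝ) + 1) ^ 2 * |besselC ν (m + l)| * R ^ m)) :
    Summable f := by
  have hR0 : (0 : ℝ) ≤ R := le_trans zero_le_one hR
  have master := besselC_master ν R hR0
  have shifted : Summable fun m : ℕ => (((m + l : ℕ) : ℝ) + 1) ^ 2 * |besselC ν (m + l)| * R ^ (m + l) :=
    (summable_nat_add_iff l).2 master
  have hdom : Summable fun m : ℕ => ((m : ℝ) + 1) ^ 2 * |besselC ν (m + l)| * R ^ m := by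
    apply shifted.of_nonneg_of_le (fun m => by positivity)
    intro m
    have h1 : ((m : ℝ) + 1) ^ 2 ≤ (((m + l : ℕ) : ℝ) + 1) ^ 2 := by
      apply pow_le_pow_left₀ (by positivity)
      push_cast
      linarith [Nat.cast_nonneg (α := ℝ) l]
    have h2 : R ^ m ≤ R ^ (m + l) := pow_le_pow_right₀ hR (Nat.le_add_right m l)
    calc ((m : ℝ) + 1) ^ 2 * |besselC ν (m + l)| * R ^ m
        ≤ (((m + l : ℕ) : ℝ) + 1) ^ 2 * |besselC ν (m + l)| * R ^ m :=
          mul_le_mul_of_nonneg_right (mul_le_mul_of_nonneg_right h1 (abs_nonneg _)) (by positivity)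
      _ ≤ (((m + l : ℕ) : ℝ) + 1) ^ 2 * |besselC ν (m + l)| * R ^ (m + l) :=
          mul_le_mul_of_nonneg_left h2 (by positivity)
  exact Summable.of_norm_bounded (hdom.mul_left C) (by simpa using hf)

noncomputable def besselG (ν : ℝ) (y : ℝ) : ℝ := ∑' m : ℕ, besselC ν m * y ^ m
noncomputable def besselG1 (ν : ℝ) (y : ℝ) : ℝ :=
  ∑' m : ℕ, ((m : ℝ) + 1) * besselC ν (m + 1) * y ^ m
noncomputable def besselG2 (ν : ℝ) (y : ℝ) : ℝ :=
  ∑' m : ℕ, ((m : ℝ) + 2) * ((m : ℝ) + 1) * besselC ν (m + 2) * y ^ m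

lemma dom_helper (ν y : ℝ) (l : ℕ) (A : ℕ → ℝ) (hA : ∀ m, |A m| ≤ ((m : ℝ) + 1) ^ 2)
    (e : ℕ → ℕ) (he : ∀ m, e m ≤ m) :
    Summable (fun m : ℕ => A m * besselC ν (m + l) * y ^ (e m)) := by
  set R := |y| + 1 with hRdef
  have hR1 : 1 ≤ R := le_add_of_nonneg_left (abs_nonneg y)
  apply besselC_dom ν R 1 hR1 l
  intro m
  rw [abs_mul, abs_mul, abs_pow, one_mul]
  have hyR : |y| ≤ R := by simp [hRdef]
  have h1 : |y| ^ (e m) ≤ R ^ m :=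
    le_trans (pow_le_pow_left₀ (abs_nonneg y) hyR _) (pow_le_pow_right₀ hR1 (he m))
  have h2 : |A m| * |besselC ν (m + l)| ≤ ((m : ℝ) + 1) ^ 2 * |besselC ν (m + l)| :=
    mul_le_mul_of_nonneg_right (hA m) (abs_nonneg _)
  exact mul_le_mul h2 h1 (by positivity) (by positivity)

lemma hasDerivAt_besselG (ν y : ℝ) : HasDerivAt (besselG ν) (besselG1 ν y) y := by
  set R := |y| + 1 with hRdef
  have hR1 : (1 : ℝ) ≤ R := le_add_of_nonneg_left (abs_nonneg y)
  have hR0 : (0 : ℝ) ≤ R := le_trans zero_le_one hR1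
  have hy : y ∈ Ioo (-R) R := by
    constructor
    · have := neg_abs_le y; simp only [hRdef]; linarith
    · have := le_abs_self y; simp only [hRdef]; linarith
  have hsum0 : Summable fun m : ℕ => besselC ν m * y ^ m := by
    have := dom_helper ν y 0 (fun _ => 1) (fun m => by
      show |(1:ℝ)| ≤ ((m : ℝ) + 1) ^ 2
      rw [abs_one]; nlinarith [Nat.cast_nonneg (α := ℝ) m]) (fun m => m) (fun m => le_rfl)
    simpa using this
  have key : HasDerivAt (besselG ν) (∑' m : ℕ, besselC ν m * ((m : ℝ) * y ^ (m - 1))) y := by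
    apply hasDerivAt_tsum_of_isPreconnected (besselC_master ν R hR0) isOpen_Ioo
      (convex_Ioo _ _).isPreconnected
      (fun m z _ => (hasDerivAt_pow m z).const_mul (besselC ν m)) ?_ hy hsum0 hy
    intro m z hz
    rw [Real.norm_eq_abs, abs_mul, abs_mul, abs_pow, Nat.abs_cast]
    have hzR : |z| ≤ R := by
      rw [abs_le]; exact ⟨hz.1.le, hz.2.le⟩
    have h1 : |z| ^ (m - 1) ≤ R ^ m :=
      le_trans (pow_le_pow_left₀ (abs_nonneg z) hzR _) (pow_le_pow_right₀ hR1 (Nat.sub_le m 1))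
    have h2 : (m : ℝ) ≤ ((m : ℝ) + 1) ^ 2 := by nlinarith [Nat.cast_nonneg (α := ℝ) m]
    calc |besselC ν m| * ((m : ℝ) * |z| ^ (m - 1))
        ≤ |besselC ν m| * (((m : ℝ) + 1) ^ 2 * R ^ m) := by
          apply mul_le_mul_of_nonneg_left _ (abs_nonneg _)
          exact mul_le_mul h2 h1 (by positivity) (by positivity)
      _ = ((m : ℝ) + 1) ^ 2 * |besselC ν m| * R ^ m := by ring
  have hshift : Summable fun m : ℕ => besselC ν m * ((m : ℝ) * y ^ (m - 1)) := by
    have := dom_helper ν y 0 (fun m => (m : ℝ)) (fun m => by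
      show |(m : ℝ)| ≤ ((m : ℝ) + 1) ^ 2
      rw [Nat.abs_cast]; nlinarith [Nat.cast_nonneg (α := ℝ) m]) (fun m => m - 1)
      (fun m => Nat.sub_le m 1)
    apply this.congr
    intro m; ring
  have heq : (∑' m : ℕ, besselC ν m * ((m : ℝ) * y ^ (m - 1))) = besselG1 ν y := by
    rw [Summable.tsum_eq_zero_add hshift]
    simp only [Nat.cast_zero, zero_mul, mul_zero, zero_add, Nat.cast_add, Nat.cast_one,
      Nat.add_sub_cancel]
    exact tsum_congr fun m => by ring
  rw [← heq]
  exact key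

lemma hasDerivAt_besselG1 (ν y : ℝ) : HasDerivAt (besselG1 ν) (besselG2 ν y) y := by
  set R := |y| + 1 with hRdef
  have hR1 : (1 : ℝ) ≤ R := le_add_of_nonneg_left (abs_nonneg y)
  have hR0 : (0 : ℝ) ≤ R := le_trans zero_le_one hR1
  have hy : y ∈ Ioo (-R) R := by
    constructor
    · have := neg_abs_le y; simp only [hRdef]; linarith
    · have := le_abs_self y; simp only [hRdef]; linarith
  have hu : Summable fun m : ℕ => ((m : ℝ) + 1) ^ 2 * |besselC ν (m + 1)| * R ^ m := by
    apply besselC_dom ν R 1 hR1 1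
    intro m
    rw [abs_of_nonneg (by positivity), one_mul]
  have hsum0 : Summable fun m : ℕ => ((m : ℝ) + 1) * besselC ν (m + 1) * y ^ m := by
    exact dom_helper ν y 1 (fun m => (m : ℝ) + 1) (fun m => by
      show |(m : ℝ) + 1| ≤ ((m : ℝ) + 1) ^ 2
      rw [abs_of_nonneg (by positivity)]; nlinarith [Nat.cast_nonneg (α := ℝ) m]) (fun m => m)
      (fun m => le_rfl)
  have key : HasDerivAt (besselG1 ν)
      (∑' m : ℕ, ((m : ℝ) + 1) * besselC ν (m + 1) * ((m : ℝ) * y ^ (m - 1))) y := by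
    apply hasDerivAt_tsum_of_isPreconnected hu isOpen_Ioo
      (convex_Ioo _ _).isPreconnected
      (fun m z _ => (hasDerivAt_pow m z).const_mul (((m : ℝ) + 1) * besselC ν (m + 1)))
      ?_ hy hsum0 hy
    intro m z hz
    rw [Real.norm_eq_abs, abs_mul, abs_mul, abs_mul, abs_pow, Nat.abs_cast,
      abs_of_nonneg (show (0:ℝ) ≤ (m : ℝ) + 1 by positivity)]
    have hzR : |z| ≤ R := by rw [abs_le]; exact ⟨hz.1.le, hz.2.le⟩
    have h1 : |z| ^ (m - 1) ≤ R ^ m :=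
      le_trans (pow_le_pow_left₀ (abs_nonneg z) hzR _) (pow_le_pow_right₀ hR1 (Nat.sub_le m 1))
    have h2 : ((m : ℝ) + 1) * (m : ℝ) ≤ ((m : ℝ) + 1) ^ 2 := by
      nlinarith [Nat.cast_nonneg (α := ℝ) m]
    calc ((m : ℝ) + 1) * |besselC ν (m + 1)| * ((m : ℝ) * |z| ^ (m - 1))
        = (((m : ℝ) + 1) * (m : ℝ)) * |besselC ν (m + 1)| * |z| ^ (m - 1) := by ring
      _ ≤ ((m : ℝ) + 1) ^ 2 * |besselC ν (m + 1)| * R ^ m := by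
          apply mul_le_mul _ h1 (by positivity) (by positivity)
          exact mul_le_mul_of_nonneg_right h2 (abs_nonneg _)
  have hshift : Summable fun m : ℕ => ((m : ℝ) + 1) * besselC ν (m + 1) * ((m : ℝ) * y ^ (m - 1)) := by
    have := dom_helper ν y 1 (fun m => ((m : ℝ) + 1) * (m : ℝ)) (fun m => by
      show |((m : ℝ) + 1) * (m : ℝ)| ≤ ((m : ℝ) + 1) ^ 2
      rw [abs_of_nonneg (by positivity)]; nlinarith [Nat.cast_nonneg (α := ℝ) m]) (fun m => m - 1)
      (fun m => Nat.sub_le m 1)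
    apply this.congr
    intro m; ring
  have heq : (∑' m : ℕ, ((m : ℝ) + 1) * besselC ν (m + 1) * ((m : ℝ) * y ^ (m - 1)))
      = besselG2 ν y := by
    rw [Summable.tsum_eq_zero_add hshift]
    simp only [Nat.cast_zero, zero_mul, mul_zero, zero_add, Nat.cast_add, Nat.cast_one,
      Nat.add_sub_cancel]
    exact tsum_congr fun m => by push_cast; ring
  rw [← heq]
  exact key

lemma besselG_ode (ν y : ℝ) :
    y * besselG2 ν y + (ν + 1) * besselG1 ν y + besselG ν y = 0 := by
  have Sh : Summable fun m : ℕ => (m : ℝ) * (((m : ℝ) + 1) * besselC ν (m + 1)) * y ^ m := by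
    exact dom_helper ν y 1 (fun m => (m : ℝ) * ((m : ℝ) + 1)) (fun m => by
      show |(m : ℝ) * ((m : ℝ) + 1)| ≤ ((m : ℝ) + 1) ^ 2
      rw [abs_of_nonneg (by positivity)]; nlinarith [Nat.cast_nonneg (α := ℝ) m]) (fun m => m)
      (fun m => le_rfl) |>.congr (fun m => by ring)
  have S1 : Summable fun m : ℕ => (ν + 1) * (((m : ℝ) + 1) * besselC ν (m + 1) * y ^ m) := by
    apply Summable.mul_left
    exact dom_helper ν y 1 (fun m => (m : ℝ) + 1) (fun m => by
      show |(m : ℝ) + 1| ≤ ((m : ℝ) + 1) ^ 2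
      rw [abs_of_nonneg (by positivity)]; nlinarith [Nat.cast_nonneg (α := ℝ) m]) (fun m => m)
      (fun m => le_rfl)
  have hyG2 : y * besselG2 ν y
      = ∑' m : ℕ, (m : ℝ) * (((m : ℝ) + 1) * besselC ν (m + 1)) * y ^ m := by
    rw [Summable.tsum_eq_zero_add Sh]
    simp only [Nat.cast_zero, zero_mul, zero_add, Nat.cast_add, Nat.cast_one]
    rw [besselG2, ← tsum_mul_left]
    exact tsum_congr fun m => by push_cast; ring
  have hG : besselG ν y
      = ∑' m : ℕ, (-(((m : ℝ) + 1) * (ν + m + 1) * besselC ν (m + 1))) * y ^ m := by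
    refine tsum_congr fun m => ?_
    rw [besselC_rec ν m, neg_neg]
  have hG1 : (ν + 1) * besselG1 ν y
      = ∑' m : ℕ, (ν + 1) * (((m : ℝ) + 1) * besselC ν (m + 1) * y ^ m) := by
    rw [besselG1, ← tsum_mul_left]
  have SG : Summable fun m : ℕ => (-(((m : ℝ) + 1) * (ν + m + 1) * besselC ν (m + 1))) * y ^ m := by
    apply Summable.congr _ (fun m => by rw [besselC_rec ν m, neg_neg])
    · exact dom_helper ν y 0 (fun _ => 1) (fun m => by
        show |(1:ℝ)| ≤ ((m : ℝ) + 1) ^ 2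
        rw [abs_one]; nlinarith [Nat.cast_nonneg (α := ℝ) m]) (fun m => m)
        (fun m => le_rfl) |>.congr (fun m => by ring)
  rw [hyG2, hG1, hG, ← Summable.tsum_add Sh S1, ← Summable.tsum_add (Sh.add S1) SG]
  convert tsum_zero with m
  ring

noncomputable def besselU (ν x : ℝ) : ℝ := x ^ (ν + 1/2 : ℝ) * besselG ν (x ^ 2 / 4)

noncomputable def besselU1 (ν x : ℝ) : ℝ :=
  (ν + 1/2) * x ^ (ν - 1/2 : ℝ) * besselG ν (x ^ 2 / 4)
    + x ^ (ν + 1/2 : ℝ) * (x / 2 * besselG1 ν (x ^ 2 / 4))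

noncomputable def besselQ (ν x : ℝ) : ℝ := 1 + (1/4 - ν ^ 2) / x ^ 2

lemma hasDerivAt_sq4 (x : ℝ) : HasDerivAt (fun x : ℝ => x ^ 2 / 4) (x / 2) x := by
  have := (hasDerivAt_pow 2 x).div_const 4
  refine this.congr_deriv ?_
  norm_num
  ring

lemma hasDerivAt_rpow_shift (p x : ℝ) (hx : 0 < x) :
    HasDerivAt (fun x : ℝ => x ^ (p + 1 : ℝ)) ((p + 1) * x ^ (p : ℝ)) x := by
  have := Real.hasDerivAt_rpow_const (p := p + 1) (x := x) (Or.inl hx.ne')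
  simpa using this

lemma hasDerivAt_besselU (ν x : ℝ) (hx : 0 < x) :
    HasDerivAt (besselU ν) (besselU1 ν x) x := by
  have hrp : HasDerivAt (fun x : ℝ => x ^ (ν + 1/2 : ℝ)) ((ν + 1/2) * x ^ (ν - 1/2 : ℝ)) x := by
    have := hasDerivAt_rpow_shift (ν - 1/2) x hx
    rw [show ν - 1/2 + 1 = ν + 1/2 by ring] at this
    exact this
  have hcomp : HasDerivAt (fun x : ℝ => besselG ν (x ^ 2 / 4))
      (besselG1 ν (x ^ 2 / 4) * (x / 2)) x :=
    by have := (hasDerivAt_besselG ν (x ^ 2 / 4)).comp x (hasDerivAt_sq4 x); exact this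
  have := hrp.mul hcomp
  unfold besselU besselU1
  refine this.congr_deriv ?_
  ring

lemma hasDerivAt_besselU1 (ν x : ℝ) (hx : 0 < x) :
    HasDerivAt (besselU1 ν) (-(besselQ ν x * besselU ν x)) x := by
  have hrp : HasDerivAt (fun x : ℝ => x ^ (ν + 1/2 : ℝ)) ((ν + 1/2) * x ^ (ν - 1/2 : ℝ)) x := by
    have := hasDerivAt_rpow_shift (ν - 1/2) x hx
    rw [show ν - 1/2 + 1 = ν + 1/2 by ring] at this
    exact this
  have hrp2 : HasDerivAt (fun x : ℝ => x ^ (ν - 1/2 : ℝ)) ((ν - 1/2) * x ^ (ν - 3/2 : ℝ)) x := by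
    have := hasDerivAt_rpow_shift (ν - 3/2) x hx
    rw [show ν - 3/2 + 1 = ν - 1/2 by ring] at this
    exact this
  have hcomp : HasDerivAt (fun x : ℝ => besselG ν (x ^ 2 / 4))
      (besselG1 ν (x ^ 2 / 4) * (x / 2)) x :=
    by have := (hasDerivAt_besselG ν (x ^ 2 / 4)).comp x (hasDerivAt_sq4 x); exact this
  have hcomp1 : HasDerivAt (fun x : ℝ => besselG1 ν (x ^ 2 / 4))
      (besselG2 ν (x ^ 2 / 4) * (x / 2)) x :=
    by have := (hasDerivAt_besselG1 ν (x ^ 2 / 4)).comp x (hasDerivAt_sq4 x); exact this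
  have t1 : HasDerivAt (fun x : ℝ => (ν + 1/2) * x ^ (ν - 1/2 : ℝ) * besselG ν (x ^ 2 / 4))
      (((ν + 1/2) * ((ν - 1/2) * x ^ (ν - 3/2 : ℝ))) * besselG ν (x ^ 2 / 4)
        + ((ν + 1/2) * x ^ (ν - 1/2 : ℝ)) * (besselG1 ν (x ^ 2 / 4) * (x / 2))) x :=
    (hrp2.const_mul (ν + 1/2)).mul hcomp
  have hhalf : HasDerivAt (fun x : ℝ => x / 2) (1 / 2 : ℝ) x := by
    simpa using (hasDerivAt_id x).div_const 2
  have t2in : HasDerivAt (fun x : ℝ => x / 2 * besselG1 ν (x ^ 2 / 4))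
      (1 / 2 * besselG1 ν (x ^ 2 / 4) + x / 2 * (besselG2 ν (x ^ 2 / 4) * (x / 2))) x :=
    hhalf.mul hcomp1
  have t2 := hrp.mul t2in
  have tt := t1.add t2
  have hfun : besselU1 ν = fun x : ℝ => (ν + 1/2) * x ^ (ν - 1/2 : ℝ) * besselG ν (x ^ 2 / 4)
      + x ^ (ν + 1/2 : ℝ) * (x / 2 * besselG1 ν (x ^ 2 / 4)) := rfl
  rw [hfun]
  refine tt.congr_deriv ?_
  -- now the value identity
  have hode := besselG_ode ν (x ^ 2 / 4)
  have hg0 : besselG ν (x ^ 2 / 4)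
      = -((ν + 1) * besselG1 ν (x ^ 2 / 4) + x ^ 2 / 4 * besselG2 ν (x ^ 2 / 4)) := by
    linarith [hode]
  have e1 : x ^ (ν - 1/2 : ℝ) = x ^ (ν - 3/2 : ℝ) * x := by
    rw [show ν - 1/2 = ν - 3/2 + 1 by ring, Real.rpow_add_one hx.ne']
  have e2 : x ^ (ν + 1/2 : ℝ) = x ^ (ν - 3/2 : ℝ) * x * x := by
    rw [show ν + 1/2 = ν - 3/2 + 1 + 1 by ring, Real.rpow_add_one hx.ne',
      Real.rpow_add_one hx.ne']
  unfold besselQ besselU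
  rw [e1, e2, hg0]
  field_simp
  ring

lemma besselJ_factor (ν x : ℝ) (hx : 0 < x) :
    besselJ ν x = (x / 2) ^ (ν : ℝ) * besselG ν (x ^ 2 / 4) := by
  unfold besselJ besselG
  rw [← tsum_mul_left]
  apply tsum_congr
  intro m
  have h2 : (0 : ℝ) < x / 2 := by linarith
  rw [show (2 * (m : ℝ) + ν) = ((2 * m : ℕ) : ℝ) + ν by push_cast; ring,
    Real.rpow_add h2, Real.rpow_natCast, pow_mul, show (x / 2) ^ 2 = x ^ 2 / 4 by ring]
  unfold besselC
  ring

lemma besselJ_zero_iff (ν x : ℝ) (hx : 0 < x) :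
    besselJ ν x = 0 ↔ besselG ν (x ^ 2 / 4) = 0 := by
  rw [besselJ_factor ν x hx, mul_eq_zero]
  have : (x / 2) ^ (ν : ℝ) ≠ 0 := (Real.rpow_pos_of_pos (by linarith) ν).ne'
  tauto

lemma besselU_zero_iff (ν x : ℝ) (hx : 0 < x) :
    besselU ν x = 0 ↔ besselG ν (x ^ 2 / 4) = 0 := by
  unfold besselU
  rw [mul_eq_zero]
  have : x ^ (ν + 1/2 : ℝ) ≠ 0 := (Real.rpow_pos_of_pos hx _).ne'
  tauto

/-- FTC for the Wronskian of two solutions of second order ODEs. -/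
lemma wronskian_integral {a b : ℝ} (hab : a ≤ b) (UU UU₁ VV VV₁ P Q : ℝ → ℝ)
    (hU : ∀ x ∈ Icc a b, HasDerivAt UU (UU₁ x) x)
    (hU₁ : ∀ x ∈ Icc a b, HasDerivAt UU₁ (-(P x * UU x)) x)
    (hV : ∀ x ∈ Icc a b, HasDerivAt VV (VV₁ x) x)
    (hV₁ : ∀ x ∈ Icc a b, HasDerivAt VV₁ (-(Q x * VV x)) x)
    (hP : ContinuousOn P (Icc a b)) (hQ : ContinuousOn Q (Icc a b)) :
    (VV₁ b * UU b - VV b * UU₁ b) - (VV₁ a * UU a - VV a * UU₁ a)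
      = ∫ x in a..b, (P x - Q x) * (UU x * VV x) := by
  have hUc : ContinuousOn UU (Icc a b) := fun x hx => ((hU x hx).continuousAt).continuousWithinAt
  have hU₁c : ContinuousOn UU₁ (Icc a b) := fun x hx => ((hU₁ x hx).continuousAt).continuousWithinAt
  have hVc : ContinuousOn VV (Icc a b) := fun x hx => ((hV x hx).continuousAt).continuousWithinAt
  have hV₁c : ContinuousOn VV₁ (Icc a b) := fun x hx => ((hV₁ x hx).continuousAt).continuousWithinAt
  have hint : IntervalIntegrable (fun x => (P x - Q x) * (UU x * VV x)) volume a b := by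
    apply ContinuousOn.intervalIntegrable
    rw [uIcc_of_le hab]
    exact ((hP.sub hQ).mul (hUc.mul hVc))
  have hder : ∀ x ∈ uIcc a b,
      HasDerivAt (fun x => VV₁ x * UU x - VV x * UU₁ x) ((P x - Q x) * (UU x * VV x)) x := by
    intro x hx
    rw [uIcc_of_le hab] at hx
    have h := ((hV₁ x hx).mul (hU x hx)).sub ((hV x hx).mul (hU₁ x hx))
    refine h.congr_deriv ?_
    ring
  have := integral_eq_sub_of_hasDerivAt hder hint
  rw [this]

/-- A continuous function with no zeros on an open interval has constant sign. -/
lemma sign_const {f : ℝ → ℝ} {a b : ℝ} (hab : a < b) (hf : ContinuousOn f (Icc a b))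
    (hne : ∀ x ∈ Ioo a b, f x ≠ 0) :
    ∃ σ : ℝ, (σ = 1 ∨ σ = -1) ∧ ∀ x ∈ Ioo a b, 0 < σ * f x := by
  set x₀ := (a + b) / 2 with hx₀
  have hx₀m : x₀ ∈ Ioo a b := by constructor <;> (simp only [hx₀]; linarith)
  rcases lt_or_gt_of_ne (hne x₀ hx₀m) with hneg | hpos
  · refine ⟨-1, Or.inr rfl, fun x hx => ?_⟩
    rcases lt_trichotomy (f x) 0 with h | h | h
    · nlinarith
    · exact absurd h (hne x hx)
    · -- f x > 0, f x₀ < 0 : IVT gives an interior zero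
      exfalso
      rcases le_total x x₀ with hle | hle
      · have hsub : Icc x x₀ ⊆ Icc a b := Icc_subset_Icc hx.1.le hx₀m.2.le
        have : (0 : ℝ) ∈ Ioo (f x₀) (f x) := ⟨hneg, h⟩
        have hIoo := intermediate_value_Ioo' hle (hf.mono hsub)
        obtain ⟨c, hc, hfc⟩ := hIoo this
        exact hne c ⟨lt_trans hx.1 hc.1, lt_trans hc.2 hx₀m.2⟩ hfc
      · have hsub : Icc x₀ x ⊆ Icc a b := Icc_subset_Icc hx₀m.1.le hx.2.le
        have : (0 : ℝ) ∈ Ioo (f x₀) (f x) := ⟨hneg, h⟩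
        have hIoo := intermediate_value_Ioo hle (hf.mono hsub)
        obtain ⟨c, hc, hfc⟩ := hIoo this
        exact hne c ⟨lt_trans hx₀m.1 hc.1, lt_trans hc.2 hx.2⟩ hfc
  · refine ⟨1, Or.inl rfl, fun x hx => ?_⟩
    rcases lt_trichotomy (f x) 0 with h | h | h
    · exfalso
      rcases le_total x x₀ with hle | hle
      · have hsub : Icc x x₀ ⊆ Icc a b := Icc_subset_Icc hx.1.le hx₀m.2.le
        have : (0 : ℝ) ∈ Ioo (f x) (f x₀) := ⟨h, hpos⟩
        obtain ⟨c, hc, hfc⟩ := intermediate_value_Ioo hle (hf.mono hsub) this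
        exact hne c ⟨lt_trans hx.1 hc.1, lt_trans hc.2 hx₀m.2⟩ hfc
      · have hsub : Icc x₀ x ⊆ Icc a b := Icc_subset_Icc hx₀m.1.le hx.2.le
        have : (0 : ℝ) ∈ Ioo (f x) (f x₀) := ⟨h, hpos⟩
        obtain ⟨c, hc, hfc⟩ := intermediate_value_Ioo' hle (hf.mono hsub) this
        exact hne c ⟨lt_trans hx₀m.1 hc.1, lt_trans hc.2 hx.2⟩ hfc
    · exact absurd h (hne x hx)
    · nlinarith

/-- If `f` is positive on `(a,b)`, vanishes at `b`, and has derivative `d` at `b`, then `d ≤ 0`. -/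
lemma deriv_nonpos_at_right_zero {f : ℝ → ℝ} {d a b : ℝ} (hab : a < b)
    (hd : HasDerivAt f d b) (hfb : f b = 0) (hpos : ∀ x ∈ Ioo a b, 0 < f x) : d ≤ 0 := by
  by_contra h
  push_neg at h
  have hslope : Filter.Tendsto (slope f b) (nhdsWithin b {b}ᶜ) (nhds d) :=
    hasDerivAt_iff_tendsto_slope.1 hd
  have hmono : nhdsWithin b (Iio b) ≤ nhdsWithin b {b}ᶜ :=
    nhdsWithin_mono b (fun x hx => ne_of_lt hx)
  have hslope' : Filter.Tendsto (slope f b) (nhdsWithin b (Iio b)) (nhds d) :=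
    hslope.mono_left hmono
  have hev : ∀ᶠ x in nhdsWithin b (Iio b), 0 < slope f b x :=
    hslope'.eventually (eventually_gt_nhds h)
  have hev2 : Ioo a b ∈ nhdsWithin b (Iio b) := Ioo_mem_nhdsLT_of_mem ⟨hab, le_refl b⟩
  have hfalse : ∀ᶠ x in nhdsWithin b (Iio b), False := by
    filter_upwards [hev, hev2] with x h1 h2
    rw [slope_def_field, hfb] at h1
    have hfx : 0 < f x := hpos x h2
    have hxb : x - b < 0 := sub_neg.2 h2.2
    have : (f x - 0) / (x - b) < 0 := div_neg_of_pos_of_neg (by linarith) hxb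
    linarith
  obtain ⟨x, hx⟩ := hfalse.exists
  exact hx

section packs
variable (ν σ δ : ℝ)

lemma hU_pack {x : ℝ} (hx : 0 < x) :
    HasDerivAt (fun x => σ * besselU ν x) (σ * besselU1 ν x) x :=
  (hasDerivAt_besselU ν x hx).const_mul σ

lemma hU1_pack {x : ℝ} (hx : 0 < x) :
    HasDerivAt (fun x => σ * besselU1 ν x) (-(besselQ ν x * (σ * besselU ν x))) x := by
  have := (hasDerivAt_besselU1 ν x hx).const_mul σ
  refine this.congr_deriv ?_
  ring

lemma hV_pack {x : ℝ} (hx : 0 < x - δ) :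
    HasDerivAt (fun x => σ * besselU ν (x - δ)) (σ * besselU1 ν (x - δ)) x := by
  have h1 : HasDerivAt (fun x : ℝ => x - δ) 1 x := (hasDerivAt_id x).sub_const δ
  have := ((hasDerivAt_besselU ν (x - δ) hx).comp x h1).const_mul σ
  refine this.congr_deriv ?_
  ring

lemma hV1_pack {x : ℝ} (hx : 0 < x - δ) :
    HasDerivAt (fun x => σ * besselU1 ν (x - δ))
      (-(besselQ ν (x - δ) * (σ * besselU ν (x - δ)))) x := by
  have h1 : HasDerivAt (fun x : ℝ => x - δ) 1 x := (hasDerivAt_id x).sub_const δ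
  have := ((hasDerivAt_besselU1 ν (x - δ) hx).comp x h1).const_mul σ
  refine this.congr_deriv ?_
  ring

lemma sin_pack (k a : ℝ) (x : ℝ) :
    HasDerivAt (fun x => Real.sin (k * (x - a))) (k * Real.cos (k * (x - a))) x := by
  have h1 : HasDerivAt (fun x : ℝ => k * (x - a)) k x := by
    simpa using ((hasDerivAt_id x).sub_const a).const_mul k
  have := (Real.hasDerivAt_sin (k * (x - a))).comp x h1
  refine this.congr_deriv ?_
  ring

lemma cos_pack (k a : ℝ) (x : ℝ) :
    HasDerivAt (fun x => k * Real.cos (k * (x - a)))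
      (-(k ^ 2 * Real.sin (k * (x - a)))) x := by
  have h1 : HasDerivAt (fun x : ℝ => k * (x - a)) k x := by
    simpa using ((hasDerivAt_id x).sub_const a).const_mul k
  have := ((Real.hasDerivAt_cos (k * (x - a))).comp x h1).const_mul k
  refine this.congr_deriv ?_
  ring

lemma bq_cont {a b : ℝ} (ha : 0 < a) : ContinuousOn (besselQ ν) (Icc a b) := by
  unfold besselQ
  apply continuousOn_const.add
  apply continuousOn_const.div ((continuous_pow 2).continuousOn)
  intro x hx
  exact pow_ne_zero 2 (ne_of_gt (lt_of_lt_of_le ha hx.1))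

lemma bq_shift_cont {a b : ℝ} (ha : δ < a) : ContinuousOn (fun x => besselQ ν (x - δ)) (Icc a b) := by
  unfold besselQ
  apply continuousOn_const.add
  apply continuousOn_const.div
  · exact ((continuous_pow 2).comp (continuous_id.sub continuous_const)).continuousOn
  · intro x hx
    have : 0 < x - δ := by have := hx.1; simp; linarith
    exact pow_ne_zero 2 (ne_of_gt this)

lemma besselU_contOn {a b : ℝ} (ha : 0 < a) : ContinuousOn (besselU ν) (Icc a b) :=
  fun x hx => ((hasDerivAt_besselU ν x (lt_of_lt_of_le ha hx.1)).continuousAt).continuousWithinAt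

lemma besselU1_contOn {a b : ℝ} (ha : 0 < a) : ContinuousOn (besselU1 ν) (Icc a b) :=
  fun x hx => ((hasDerivAt_besselU1 ν x (lt_of_lt_of_le ha hx.1)).continuousAt).continuousWithinAt

lemma besselQ_le_one {x : ℝ} (hν : 1/4 ≤ ν ^ 2) (hx : 0 < x) : besselQ ν x ≤ 1 := by
  unfold besselQ
  have h1 : (1/4 - ν ^ 2) / x ^ 2 ≤ 0 := div_nonpos_of_nonpos_of_nonneg (by linarith) (by positivity)
  linarith

lemma one_lt_besselQ {x : ℝ} (hν : ν ^ 2 < 1/4) (hx : 0 < x) : 1 < besselQ ν x := by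
  unfold besselQ
  have h1 : 0 < (1/4 - ν ^ 2) / x ^ 2 := div_pos (by linarith) (by positivity)
  linarith

end packs

lemma gap_ge_pi (ν a b : ℝ) (hν : 1/4 ≤ ν ^ 2) (ha : 0 < a) (hab : a < b)
    (hUa : besselU ν a = 0) (hUb : besselU ν b = 0)
    (hne : ∀ x ∈ Ioo a b, besselU ν x ≠ 0) : Real.pi ≤ b - a := by
  by_contra hlt
  push_neg at hlt
  have hba : 0 < b - a := by linarith
  set k := Real.pi / (b - a) with hk
  have hk1 : 1 < k := (one_lt_div hba).2 hlt
  have hkb : k * (b - a) = Real.pi := div_mul_cancel₀ _ hba.ne'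
  obtain ⟨σ, hσ, hσpos⟩ := sign_const hab (besselU_contOn ν ha) hne
  have hIccpos : ∀ x ∈ Icc a b, (0 : ℝ) < x := fun x hx => lt_of_lt_of_le ha hx.1
  have key := wronskian_integral hab.le (fun x => σ * besselU ν x) (fun x => σ * besselU1 ν x)
    (fun x => Real.sin (k * (x - a))) (fun x => k * Real.cos (k * (x - a)))
    (besselQ ν) (fun _ => k ^ 2)
    (fun x hx => hU_pack ν σ (hIccpos x hx))
    (fun x hx => hU1_pack ν σ (hIccpos x hx))
    (fun x _ => sin_pack k a x)
    (fun x _ => cos_pack k a x)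
    (bq_cont ν ha) continuousOn_const
  have hsin_a : Real.sin (k * (a - a)) = 0 := by simp
  have hsin_b : Real.sin (k * (b - a)) = 0 := by rw [hkb]; exact Real.sin_pi
  rw [hUa, hUb, hsin_a, hsin_b] at key
  simp only [mul_zero, zero_mul, sub_zero, sub_self, zero_sub, neg_zero] at key
  have hcont : ContinuousOn
      (fun x => -((besselQ ν x - k ^ 2) * (σ * besselU ν x * Real.sin (k * (x - a))))) (Icc a b) := by
    apply ContinuousOn.neg
    apply ContinuousOn.mul
    · exact (bq_cont ν ha).sub continuousOn_const
    · apply ContinuousOn.mul ((besselU_contOn ν ha).const_smul σ |>.congr (fun x _ => by simp))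
      exact (Real.continuous_sin.comp (continuous_const.mul (continuous_id.sub continuous_const))).continuousOn
  have hintpos : 0 < ∫ x in a..b,
      -((besselQ ν x - k ^ 2) * (σ * besselU ν x * Real.sin (k * (x - a)))) := by
    apply intervalIntegral_pos_of_pos_on
    · exact ContinuousOn.intervalIntegrable (by rw [uIcc_of_le hab.le]; exact hcont)
    · intro x hx
      have hx0 : 0 < x := lt_of_lt_of_le ha hx.1.le
      have h1 : besselQ ν x - k ^ 2 < 0 := by
        have := besselQ_le_one ν hν hx0
        have hk2 : 1 < k ^ 2 := by nlinarith
        linarith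
      have h2 : 0 < σ * besselU ν x := hσpos x hx
      have h3 : 0 < Real.sin (k * (x - a)) := by
        apply Real.sin_pos_of_pos_of_lt_pi
        · have : 0 < x - a := by linarith [hx.1]
          positivity
        · rw [← hkb]
          have : x - a < b - a := by linarith [hx.2]
          have hkpos : 0 < k := by linarith
          exact (mul_lt_mul_iff_right₀ hkpos).2 this
      nlinarith [mul_pos h2 h3]
    · exact hab
  rw [intervalIntegral.integral_neg] at hintpos
  rw [← key] at hintpos
  simp at hintpos

lemma gap_le_pi (ν a b : ℝ) (hν : ν ^ 2 < 1/4) (ha : 0 < a) (hab : a < b)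
    (hUa : besselU ν a = 0) (hUb : besselU ν b = 0)
    (hne : ∀ x ∈ Ioo a b, besselU ν x ≠ 0) : b - a ≤ Real.pi := by
  by_contra hlt
  push_neg at hlt
  have hpi := Real.pi_pos
  have hapi : a + Real.pi < b := by linarith
  obtain ⟨σ, hσ, hσpos⟩ := sign_const hab (besselU_contOn ν ha) hne
  have hIccpos : ∀ x ∈ Icc a (a + Real.pi), (0 : ℝ) < x := fun x hx => lt_of_lt_of_le ha hx.1
  have key := wronskian_integral (by linarith : a ≤ a + Real.pi)
    (fun x => σ * besselU ν x) (fun x => σ * besselU1 ν x)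
    (fun x => Real.sin (1 * (x - a))) (fun x => 1 * Real.cos (1 * (x - a)))
    (besselQ ν) (fun _ => 1 ^ 2)
    (fun x hx => hU_pack ν σ (hIccpos x hx))
    (fun x hx => hU1_pack ν σ (hIccpos x hx))
    (fun x _ => sin_pack 1 a x)
    (fun x _ => cos_pack 1 a x)
    (bq_cont ν ha) continuousOn_const
  simp only [one_mul, one_pow] at key
  have e1 : Real.sin (a - a) = 0 := by simp
  have e2 : Real.sin (a + Real.pi - a) = 0 := by
    rw [show a + Real.pi - a = Real.pi by ring]; exact Real.sin_pi
  have e3 : Real.cos (a + Real.pi - a) = -1 := by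
    rw [show a + Real.pi - a = Real.pi by ring]; exact Real.cos_pi
  rw [hUa, e1, e2, e3] at key
  simp only [zero_mul, sub_zero, mul_zero, sub_self, neg_zero] at key
  have hcont : ContinuousOn
      (fun x => (besselQ ν x - 1) * (σ * besselU ν x * Real.sin (x - a))) (Icc a (a + Real.pi)) := by
    apply ContinuousOn.mul
    · exact (bq_cont ν ha).sub continuousOn_const
    · apply ContinuousOn.mul ((besselU_contOn ν ha).const_smul σ |>.congr (fun x _ => by simp))
      exact (Real.continuous_sin.comp (continuous_id.sub continuous_const)).continuousOn
  have hintpos : 0 < ∫ x in a..(a + Real.pi),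
      (besselQ ν x - 1) * (σ * besselU ν x * Real.sin (x - a)) := by
    apply intervalIntegral_pos_of_pos_on
    · exact ContinuousOn.intervalIntegrable
        (by rw [uIcc_of_le (by linarith : a ≤ a + Real.pi)]; exact hcont)
    · intro x hx
      have hx0 : 0 < x := lt_of_lt_of_le ha hx.1.le
      have h1 : 0 < besselQ ν x - 1 := by
        have := one_lt_besselQ ν hν hx0
        linarith
      have h2 : 0 < σ * besselU ν x := hσpos x ⟨hx.1, by linarith [hx.2]⟩
      have h3 : 0 < Real.sin (x - a) := by
        apply Real.sin_pos_of_pos_of_lt_pi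
        · linarith [hx.1]
        · linarith [hx.2]
      positivity
    · linarith
  have hUapi : 0 < σ * besselU ν (a + Real.pi) := hσpos _ ⟨by linarith, hapi⟩
  nlinarith [key, hintpos, hUapi]

lemma bq_diff_eq (ν δ x : ℝ) (h0 : 0 < x - δ) (hδ : 0 < δ) :
    besselQ ν x - besselQ ν (x - δ) = (1/4 - ν ^ 2) * (1/x^2 - 1/(x-δ)^2) := by
  have hx : 0 < x := by linarith
  unfold besselQ
  field_simp
  ring

lemma inv_sq_lt (δ x : ℝ) (h0 : 0 < x - δ) (hδ : 0 < δ) : 1/x^2 - 1/(x-δ)^2 < 0 := by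
  have hx : 0 < x := by linarith
  have h1 : (x - δ)^2 < x^2 := by nlinarith
  have h2 : 1/x^2 < 1/(x-δ)^2 := one_div_lt_one_div_of_lt (by positivity) h1
  linarith

lemma step_down (ν a b c : ℝ) (hν : 1/4 < ν ^ 2) (ha : 0 < a) (hab : a < b) (hbc : b < c)
    (hUa : besselU ν a = 0) (hUb : besselU ν b = 0) (hUc : besselU ν c = 0)
    (hne1 : ∀ x ∈ Ioo a b, besselU ν x ≠ 0) (hne2 : ∀ x ∈ Ioo b c, besselU ν x ≠ 0) :
    c - b ≤ b - a := by
  by_contra hlt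
  push_neg at hlt
  set δ := b - a with hδdef
  have hδ : 0 < δ := by simp only [hδdef]; linarith
  have hbd : b + δ < c := by simp only [hδdef] at *; linarith
  obtain ⟨σ₁, hσ₁, hσ₁pos⟩ := sign_const hab (besselU_contOn ν ha) hne1
  obtain ⟨σ₂, hσ₂, hσ₂pos⟩ := sign_const hbc (besselU_contOn ν (by linarith : (0:ℝ) < b)) hne2
  have hIccpos : ∀ x ∈ Icc b (b + δ), (0 : ℝ) < x := fun x hx => by
    have := hx.1; linarith
  have hIccpos' : ∀ x ∈ Icc b (b + δ), (0 : ℝ) < x - δ := fun x hx => by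
    have := hx.1; simp only [hδdef] at *; linarith
  have key := wronskian_integral (by linarith : b ≤ b + δ)
    (fun x => σ₂ * besselU ν x) (fun x => σ₂ * besselU1 ν x)
    (fun x => σ₁ * besselU ν (x - δ)) (fun x => σ₁ * besselU1 ν (x - δ))
    (besselQ ν) (fun x => besselQ ν (x - δ))
    (fun x hx => hU_pack ν σ₂ (hIccpos x hx))
    (fun x hx => hU1_pack ν σ₂ (hIccpos x hx))
    (fun x hx => hV_pack ν σ₁ δ (hIccpos' x hx))
    (fun x hx => hV1_pack ν σ₁ δ (hIccpos' x hx))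
    (bq_cont ν (by linarith : (0:ℝ) < b)) (bq_shift_cont ν δ (by simp only [hδdef]; linarith : δ < b))
  have eb : b - δ = a := by simp only [hδdef]; ring
  have ebd : b + δ - δ = b := by ring
  rw [hUb, eb, hUa, ebd, hUb] at key
  simp only [mul_zero, zero_mul, sub_zero, sub_self, zero_sub, neg_zero] at key
  -- key : σ₁ * besselU1 ν b * (σ₂ * besselU ν (b+δ)) = ∫ ...
  have hcont : ContinuousOn (fun x => (besselQ ν x - besselQ ν (x - δ))
      * (σ₂ * besselU ν x * (σ₁ * besselU ν (x - δ)))) (Icc b (b + δ)) := by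
    apply ContinuousOn.mul
    · exact (bq_cont ν (by linarith)).sub (bq_shift_cont ν δ (by simp only [hδdef]; linarith))
    · apply ContinuousOn.mul
      · exact ((besselU_contOn ν (by linarith)).const_smul σ₂ |>.congr (fun x _ => by simp))
      · have hshift : ContinuousOn (fun x => besselU ν (x - δ)) (Icc b (b + δ)) := by
          apply ContinuousOn.comp (besselU_contOn ν (show (0:ℝ) < a from ha) (b := b))
            ((continuous_id.sub continuous_const).continuousOn)
          intro x hx
          constructor
          · have := hx.1; simp only [hδdef] at *; simp; linarith
          · have := hx.2; simp only [hδdef] at *; simp; linarith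
        exact (hshift.const_smul σ₁ |>.congr (fun x _ => by simp))
  have hintpos : 0 < ∫ x in b..(b + δ), (besselQ ν x - besselQ ν (x - δ))
      * (σ₂ * besselU ν x * (σ₁ * besselU ν (x - δ))) := by
    apply intervalIntegral_pos_of_pos_on
    · exact ContinuousOn.intervalIntegrable (by rw [uIcc_of_le (by linarith : b ≤ b + δ)]; exact hcont)
    · intro x hx
      have hx1 : 0 < x - δ := by have := hx.1; simp only [hδdef] at *; linarith
      have h1 : 0 < besselQ ν x - besselQ ν (x - δ) := by
        rw [bq_diff_eq ν δ x hx1 hδ]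
        exact mul_pos_of_neg_of_neg (by linarith) (inv_sq_lt δ x hx1 hδ)
      have h2 : 0 < σ₂ * besselU ν x := hσ₂pos x ⟨hx.1, by linarith [hx.2]⟩
      have h3 : 0 < σ₁ * besselU ν (x - δ) := by
        apply hσ₁pos
        constructor
        · simp only [hδdef] at *; linarith [hx.1]
        · simp only [hδdef] at *; linarith [hx.2]
      positivity
    · linarith
  have hd : σ₁ * besselU1 ν b ≤ 0 := by
    apply deriv_nonpos_at_right_zero hab (hU_pack ν σ₁ (by linarith : (0:ℝ) < b))
    · rw [hUb, mul_zero]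
    · exact hσ₁pos
  have hU2 : 0 < σ₂ * besselU ν (b + δ) := hσ₂pos _ ⟨by linarith, hbd⟩
  nlinarith [key, hintpos, hd, hU2]

lemma step_up (ν a b c : ℝ) (hν : ν ^ 2 < 1/4) (ha : 0 < a) (hab : a < b) (hbc : b < c)
    (hUa : besselU ν a = 0) (hUb : besselU ν b = 0) (hUc : besselU ν c = 0)
    (hne1 : ∀ x ∈ Ioo a b, besselU ν x ≠ 0) (hne2 : ∀ x ∈ Ioo b c, besselU ν x ≠ 0) :
    b - a ≤ c - b := by
  by_contra hlt
  push_neg at hlt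
  set δ := b - a with hδdef
  have hδ : 0 < δ := by simp only [hδdef]; linarith
  have hcd : c < b + δ := by simp only [hδdef] at *; linarith
  obtain ⟨σ₁, hσ₁, hσ₁pos⟩ := sign_const hab (besselU_contOn ν ha) hne1
  obtain ⟨σ₂, hσ₂, hσ₂pos⟩ := sign_const hbc (besselU_contOn ν (by linarith : (0:ℝ) < b)) hne2
  have hIccpos : ∀ x ∈ Icc b c, (0 : ℝ) < x := fun x hx => by have := hx.1; linarith
  have hIccpos' : ∀ x ∈ Icc b c, (0 : ℝ) < x - δ := fun x hx => by
    have := hx.1; simp only [hδdef] at *; linarith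
  have key := wronskian_integral hbc.le
    (fun x => σ₁ * besselU ν (x - δ)) (fun x => σ₁ * besselU1 ν (x - δ))
    (fun x => σ₂ * besselU ν x) (fun x => σ₂ * besselU1 ν x)
    (fun x => besselQ ν (x - δ)) (besselQ ν)
    (fun x hx => hV_pack ν σ₁ δ (hIccpos' x hx))
    (fun x hx => hV1_pack ν σ₁ δ (hIccpos' x hx))
    (fun x hx => hU_pack ν σ₂ (hIccpos x hx))
    (fun x hx => hU1_pack ν σ₂ (hIccpos x hx))
    (bq_shift_cont ν δ (by simp only [hδdef]; linarith : δ < b)) (bq_cont ν (by linarith : (0:ℝ) < b))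
  have eb : b - δ = a := by simp only [hδdef]; ring
  rw [hUb, hUc, eb, hUa] at key
  simp only [mul_zero, zero_mul, sub_zero, sub_self, zero_sub, neg_zero] at key
  -- key : σ₂ * besselU1 ν c * (σ₁ * besselU ν (c - δ)) = ∫ ...
  have hcont : ContinuousOn (fun x => (besselQ ν (x - δ) - besselQ ν x)
      * (σ₁ * besselU ν (x - δ) * (σ₂ * besselU ν x))) (Icc b c) := by
    apply ContinuousOn.mul
    · exact (bq_shift_cont ν δ (by simp only [hδdef]; linarith)).sub (bq_cont ν (by linarith))
    · apply ContinuousOn.mul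
      · have hshift : ContinuousOn (fun x => besselU ν (x - δ)) (Icc b c) := by
          apply ContinuousOn.comp (besselU_contOn ν (show (0:ℝ) < a from ha) (b := c))
            ((continuous_id.sub continuous_const).continuousOn)
          intro x hx
          constructor
          · have := hx.1; simp only [hδdef] at *; simp; linarith
          · have := hx.2; simp only [hδdef] at *; simp; linarith
        exact (hshift.const_smul σ₁ |>.congr (fun x _ => by simp))
      · exact ((besselU_contOn ν (by linarith)).const_smul σ₂ |>.congr (fun x _ => by simp))
  have hintpos : 0 < ∫ x in b..c, (besselQ ν (x - δ) - besselQ ν x)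
      * (σ₁ * besselU ν (x - δ) * (σ₂ * besselU ν x)) := by
    apply intervalIntegral_pos_of_pos_on
    · exact ContinuousOn.intervalIntegrable (by rw [uIcc_of_le hbc.le]; exact hcont)
    · intro x hx
      have hx1 : 0 < x - δ := by have := hx.1; simp only [hδdef] at *; linarith
      have h1 : 0 < besselQ ν (x - δ) - besselQ ν x := by
        have := bq_diff_eq ν δ x hx1 hδ
        have h2 := inv_sq_lt δ x hx1 hδ
        nlinarith
      have h2 : 0 < σ₂ * besselU ν x := hσ₂pos x hx
      have h3 : 0 < σ₁ * besselU ν (x - δ) := by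
        apply hσ₁pos
        constructor
        · simp only [hδdef] at *; linarith [hx.1]
        · simp only [hδdef] at *; linarith [hx.2]
      positivity
    · exact hbc
  have hd : σ₂ * besselU1 ν c ≤ 0 := by
    apply deriv_nonpos_at_right_zero hbc (hU_pack ν σ₂ (by linarith : (0:ℝ) < c))
    · rw [hUc, mul_zero]
    · exact hσ₂pos
  have hU2 : 0 < σ₁ * besselU ν (c - δ) := by
    apply hσ₁pos
    constructor
    · simp only [hδdef] at *; linarith
    · simp only [hδdef] at *; linarith
  nlinarith [key, hintpos, hd, hU2]

lemma step_pi (ν b : ℝ) (hν : ν ^ 2 = 1/4) (hb : 0 < b) (hUb : besselU ν b = 0) :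
    besselU ν (b + Real.pi) = 0 := by
  have hpi := Real.pi_pos
  have hq1 : ∀ x : ℝ, besselQ ν x = 1 := by
    intro x
    unfold besselQ
    rw [hν]
    simp
  have key := wronskian_integral (by linarith : b ≤ b + Real.pi)
    (besselU ν) (besselU1 ν)
    (fun x => Real.sin (1 * (x - b))) (fun x => 1 * Real.cos (1 * (x - b)))
    (fun _ => 1) (fun _ => 1 ^ 2)
    (fun x hx => hasDerivAt_besselU ν x (by have := hx.1; linarith))
    (fun x hx => by
      have := hasDerivAt_besselU1 ν x (show 0 < x by have := hx.1; linarith)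
      rwa [hq1 x] at this)
    (fun x _ => sin_pack 1 b x)
    (fun x _ => cos_pack 1 b x)
    continuousOn_const continuousOn_const
  simp only [one_mul, one_pow, sub_self, zero_mul, intervalIntegral.integral_zero] at key
  have e : b + Real.pi - b = Real.pi := by ring
  rw [e, hUb] at key
  simp [Real.sin_pi, Real.cos_pi] at key
  linarith [key]

theorem stmt10 (ν : ℝ) (j : ℕ → ℝ) (hj : IsBesselZeroSeq ν j) :
    ((1 : ℝ) / 2 ≤ |ν| →
      ∀ n, 1 ≤ n → Real.pi ≤ j (n + 1) - j n ∧
        j (n + 2) - j (n + 1) ≤ j (n + 1) - j n) ∧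
    (|ν| < 1 / 2 →
      ∀ n, 1 ≤ n → j (n + 1) - j n ≤ Real.pi ∧
        j (n + 1) - j n ≤ j (n + 2) - j (n + 1)) := by
  obtain ⟨hpos, hmono, hzero, hsurj⟩ := hj
  have hUz : ∀ n, 1 ≤ n → besselU ν (j n) = 0 := fun n hn =>
    (besselU_zero_iff ν (j n) (hpos n hn)).2 ((besselJ_zero_iff ν (j n) (hpos n hn)).1 (hzero n hn))
  have hne : ∀ n, 1 ≤ n → ∀ x ∈ Ioo (j n) (j (n + 1)), besselU ν x ≠ 0 := by
    intro n hn x hx hUx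
    have hx0 : 0 < x := lt_trans (hpos n hn) hx.1
    have hJ : besselJ ν x = 0 :=
      (besselJ_zero_iff ν x hx0).2 ((besselU_zero_iff ν x hx0).1 hUx)
    obtain ⟨m, hm1, hmx⟩ := hsurj x hx0 hJ
    have hmn : n < m := by
      rcases lt_trichotomy m n with h | h | h
      · exact absurd (lt_trans (hmono m n hm1 h) hx.1) (by rw [hmx]; exact lt_irrefl x)
      · subst h; rw [hmx] at hx; exact absurd hx.1 (lt_irrefl x)
      · exact h
    have hge : j (n + 1) ≤ j m := by
      rcases eq_or_lt_of_le (show n + 1 ≤ m by omega) with h | h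
      · rw [h]
      · exact (hmono (n + 1) m (by omega) h).le
    rw [hmx] at hge
    exact absurd hx.2 (not_lt.2 hge)
  constructor
  · intro hν n hn
    have hv2 : 1/4 ≤ ν ^ 2 := by nlinarith [sq_abs ν, abs_nonneg ν]
    have ha : 0 < j n := hpos n hn
    have hab : j n < j (n + 1) := hmono n (n + 1) hn (by omega)
    have hbc : j (n + 1) < j (n + 2) := hmono (n + 1) (n + 2) (by omega) (by omega)
    have hfirst : Real.pi ≤ j (n + 1) - j n :=
      gap_ge_pi ν (j n) (j (n + 1)) hv2 ha hab (hUz n hn) (hUz (n + 1) (by omega)) (hne n hn)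
    refine ⟨hfirst, ?_⟩
    rcases eq_or_lt_of_le hv2 with heq | hlt
    · -- ν² = 1/4 : zeros spaced exactly; use step_pi
      have hb0 : 0 < j (n + 1) := lt_trans ha hab
      have hUpi : besselU ν (j (n + 1) + Real.pi) = 0 :=
        step_pi ν (j (n + 1)) heq.symm hb0 (hUz (n + 1) (by omega))
      have hpip : 0 < j (n + 1) + Real.pi := by positivity
      have hJpi : besselJ ν (j (n + 1) + Real.pi) = 0 :=
        (besselJ_zero_iff ν _ hpip).2 ((besselU_zero_iff ν _ hpip).1 hUpi)
      obtain ⟨m, hm1, hmx⟩ := hsurj _ hpip hJpi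
      have hgt : j (n + 1) < j m := by rw [hmx]; linarith [Real.pi_pos]
      have hmn : n + 1 < m := by
        rcases lt_trichotomy m (n + 1) with h | h | h
        · exact absurd (lt_trans (hmono m (n + 1) hm1 h) hgt) (lt_irrefl _)
        · subst h; exact absurd hgt (lt_irrefl _)
        · exact h
      have hge : j (n + 2) ≤ j m := by
        rcases eq_or_lt_of_le (show n + 2 ≤ m by omega) with h | h
        · rw [h]
        · exact (hmono (n + 2) m (by omega) h).le
      rw [hmx] at hge
      have hsecond : j (n + 2) - j (n + 1) ≤ Real.pi := by linarith
      linarith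
    · exact step_down ν (j n) (j (n + 1)) (j (n + 2)) hlt ha hab hbc
        (hUz n hn) (hUz (n + 1) (by omega)) (hUz (n + 2) (by omega))
        (hne n hn) (hne (n + 1) (by omega))
  · intro hν n hn
    have hv2 : ν ^ 2 < 1/4 := by nlinarith [sq_abs ν, abs_nonneg ν]
    have ha : 0 < j n := hpos n hn
    have hab : j n < j (n + 1) := hmono n (n + 1) hn (by omega)
    have hbc : j (n + 1) < j (n + 2) := hmono (n + 1) (n + 2) (by omega) (by omega)
    refine ⟨gap_le_pi ν (j n) (j (n + 1)) hv2 ha hab (hUz n hn) (hUz (n + 1) (by omega))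
      (hne n hn), ?_⟩
    exact step_up ν (j n) (j (n + 1)) (j (n + 2)) hv2 ha hab hbc
      (hUz n hn) (hUz (n + 1) (by omega)) (hUz (n + 2) (by omega))
      (hne n hn) (hne (n + 1) (by omega))
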